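/- Let y_0 be a real number such that y_0 ≠ φ and y_0 ≠ F_{m+1}/F_m for every integer m ≥ 1, and let (y_n)_{n≥0} satisfy y_{n+1} = 1/(-1 + y_n) for all n ≥ 0. Then the sequence (y_n) converges to 1 - φ. -/

import Mathlib

theorem stmt_16 (y : ℕ → ℝ)
    (h0 : y 0 ≠ (1 + Real.sqrt 5) / 2)
    (h0' : ∀ m : ℕ, 1 ≤ m → y 0 ≠ (Nat.fib (m + 1) : ℝ) / (Nat.fib m : ℝ))
    (hrec : ∀ n : ℕ, y (n + 1) = 1 / (-1 + y n)) :
    Filter.Tendsto y Filter.atTop (nhds (1 - (1 + Real.sqrt 5) / 2)) := by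
  set b : ℝ := (1 + Real.sqrt 5) / 2 with hb
  set a : ℝ := 1 - b with ha
  have hs5 : Real.sqrt 5 ^ 2 = 5 := Real.sq_sqrt (by norm_num)
  have hs5pos : (1:ℝ) < Real.sqrt 5 := by nlinarith [Real.sqrt_nonneg 5]
  have hs5lt : Real.sqrt 5 < 3 := by nlinarith [Real.sqrt_nonneg 5]
  have hb1 : 1 < b := by rw [hb]; linarith
  have hb2 : b < 2 := by rw [hb]; linarith
  have hbsq : b ^ 2 = b + 1 := by rw [hb]; nlinarith
  have hasq : a ^ 2 = a + 1 := by rw [ha]; nlinarith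
  have ha0 : a ≠ 0 := by rw [ha]; intro h; nlinarith
  have hb0 : b ≠ 0 := by positivity
  have haneg : a < 0 := by rw [ha]; linarith
  -- Step 1: y n ≠ b for all n
  have hyb : ∀ n, y n ≠ b := by
    intro n
    induction n with
    | zero => exact h0
    | succ n ih =>
      intro h
      rw [hrec n] at h
      by_cases h1 : y n = 1
      · rw [h1] at h; norm_num at h; exact absurd h.symm (by linarith)
      · have hd : -1 + y n ≠ 0 := fun hc => h1 (by linarith)
        apply ih
        field_simp at h
        nlinarith [h]
  -- Step 2: y n avoids all fib ratios
  have hfib : ∀ n, ∀ m : ℕ, 1 ≤ m → y n ≠ (Nat.fib (m + 1) : ℝ) / (Nat.fib m : ℝ) := by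
    intro n
    induction n with
    | zero => exact h0'
    | succ n ih =>
      intro m hm heq
      have h1 : y n ≠ 1 := by
        have := ih 1 le_rfl
        simpa [Nat.fib] using this
      have hd : -1 + y n ≠ 0 := fun hc => h1 (by linarith)
      have hfm : (0:ℝ) < Nat.fib m := by
        exact_mod_cast Nat.fib_pos.mpr (by omega)
      have hfm1 : (0:ℝ) < Nat.fib (m+1) := by
        exact_mod_cast Nat.fib_pos.mpr (by omega)
      rw [hrec n] at heq
      apply ih (m + 1) (by omega)
      have h2 : (Nat.fib (m + 2) : ℝ) = Nat.fib (m+1) + Nat.fib m := by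
        rw [Nat.fib_add_two]; push_cast; ring
      rw [h2]
      field_simp at heq ⊢
      nlinarith [heq]
  have hy1 : ∀ n, y n ≠ 1 := by
    intro n
    have := hfib n 1 le_rfl
    simpa [Nat.fib] using this
  -- Step 3: z is geometric
  set z : ℕ → ℝ := fun n => (y n - a) / (y n - b) with hz
  have hzrec : ∀ n, z (n + 1) = (a / b) * z n := by
    intro n
    have hd : -1 + y n ≠ 0 := fun hc => hy1 n (by linarith)
    have hdb : y n - b ≠ 0 := sub_ne_zero.mpr (hyb n)
    simp only [hz]
    rw [hrec n]
    have hnum : 1 / (-1 + y n) - a = -a * (y n - a) / (-1 + y n) := by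
      field_simp
      linear_combination -hasq
    have hden : 1 / (-1 + y n) - b = -b * (y n - b) / (-1 + y n) := by
      field_simp
      linear_combination -hbsq
    rw [hnum, hden, div_div_div_eq]
    field_simp
  have hzn : ∀ n, z n = (a / b) ^ n * z 0 := by
    intro n
    induction n with
    | zero => simp
    | succ n ih => rw [hzrec n, ih]; ring
  have hclt : |a / b| < 1 := by
    rw [abs_div, abs_of_neg haneg, abs_of_pos (by linarith : (0:ℝ) < b)]
    rw [div_lt_one (by linarith : (0:ℝ) < b)]
    rw [ha]; linarith
  have hz0 : Filter.Tendsto z Filter.atTop (nhds 0) := by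
    have h1 := tendsto_pow_atTop_nhds_zero_of_abs_lt_one hclt
    have h2 : Filter.Tendsto (fun n => (a / b) ^ n * z 0) Filter.atTop (nhds (0 * z 0)) :=
      h1.mul_const (z 0)
    rw [zero_mul] at h2
    exact h2.congr (fun n => (hzn n).symm)
  -- Step 4: recover y from z
  have hzne1 : ∀ n, z n ≠ 1 := by
    intro n h
    have hdb : y n - b ≠ 0 := sub_ne_zero.mpr (hyb n)
    simp only [hz] at h
    rw [div_eq_one_iff_eq hdb] at h
    have : a = b := by linarith
    linarith
  have hyz : ∀ n, y n = (a - b * z n) / (1 - z n) := by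
    intro n
    have hdb : y n - b ≠ 0 := sub_ne_zero.mpr (hyb n)
    have h1 : 1 - z n ≠ 0 := fun h => hzne1 n (by linarith)
    simp only [hz] at h1 ⊢
    field_simp at h1 ⊢
    ring_nf
    ring_nf at h1
    field_simp
    have hab : a - b ≠ 0 := ne_of_lt (by linarith)
    exact (mul_div_cancel_right₀ (y n) hab).symm
  have hfin : Filter.Tendsto (fun n => (a - b * z n) / (1 - z n)) Filter.atTop
      (nhds ((a - b * 0) / (1 - 0))) := by
    apply Filter.Tendsto.div
    · exact tendsto_const_nhds.sub (hz0.const_mul b)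
    · exact tendsto_const_nhds.sub hz0
    · norm_num
  have : ((a - b * 0) / (1 - 0)) = a := by norm_num
  rw [this] at hfin
  exact hfin.congr (fun n => (hyz n).symm)
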